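/- With the convention π_0 = 0, the number of permutations of {1,...,n} with peak set exactly {1} equals 2^{n-1} - 1. -/

import Mathlib

open Finset

/-- Value at (1-indexed) position `i` of the signed permutation represented by a pair
`(σ, ε)`: the value is `±(σ(i)+1)`, negative iff `ε i = true`. Returns 0 out of range. -/
def bval (n : ℕ) (π : Equiv.Perm (Fin n) × (Fin n → Bool)) (i : ℕ) : ℤ :=
  if h : i - 1 < n then
    (if π.2 ⟨i - 1, h⟩ then (-1 : ℤ) else 1) * (((π.1 ⟨i - 1, h⟩ : ℕ) : ℤ) + 1)
  else 0

/-- Peak set of a signed permutation: positions `i ∈ {2,…,n-1}` with `π_{i-1} < π_i > π_{i+1}`. -/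
def bPeakSet (n : ℕ) (π : Equiv.Perm (Fin n) × (Fin n → Bool)) : Finset ℕ :=
  (Finset.Icc 2 (n - 1)).filter fun i =>
    bval n π (i - 1) < bval n π i ∧ bval n π (i + 1) < bval n π i

/-- `#P_B(S,n)`: number of signed permutations in `B_n` with peak set exactly `S`. -/
def PB (n : ℕ) (S : Finset ℕ) : ℕ :=
  (Finset.univ.filter fun π : Equiv.Perm (Fin n) × (Fin n → Bool) => bPeakSet n π = S).card

/-- Value with the convention `π_0 = 0`. -/
def bvalHat (n : ℕ) (π : Equiv.Perm (Fin n) × (Fin n → Bool)) (i : ℕ) : ℤ :=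
  if i = 0 then 0 else bval n π i

/-- Peak set with `π_0 = 0`: positions `i ∈ {1,…,n-1}` with `π_{i-1} < π_i > π_{i+1}`. -/
def bPeakSetHat (n : ℕ) (π : Equiv.Perm (Fin n) × (Fin n → Bool)) : Finset ℕ :=
  (Finset.Icc 1 (n - 1)).filter fun i =>
    bvalHat n π (i - 1) < bvalHat n π i ∧ bvalHat n π (i + 1) < bvalHat n π i

/-- `#P̂_B(S,n)`: signed permutations with `π_0 = 0` prepended and peak set exactly `S`. -/
def PBhat (n : ℕ) (S : Finset ℕ) : ℕ :=
  (Finset.univ.filter fun π : Equiv.Perm (Fin n) × (Fin n → Bool) => bPeakSetHat n π = S).card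

/-- Value at (1-indexed) position `i` of an ordinary permutation of `{1,…,n}`. -/
def sval (n : ℕ) (π : Equiv.Perm (Fin n)) (i : ℕ) : ℤ :=
  if h : i - 1 < n then ((π ⟨i - 1, h⟩ : ℕ) : ℤ) + 1 else 0

/-- Peak set of an ordinary permutation: positions `i ∈ {2,…,n-1}`. -/
def sPeakSet (n : ℕ) (π : Equiv.Perm (Fin n)) : Finset ℕ :=
  (Finset.Icc 2 (n - 1)).filter fun i =>
    sval n π (i - 1) < sval n π i ∧ sval n π (i + 1) < sval n π i

/-- `#P(S,n)`: number of permutations of `{1,…,n}` with peak set exactly `S`. -/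
def PP (n : ℕ) (S : Finset ℕ) : ℕ :=
  (Finset.univ.filter fun π : Equiv.Perm (Fin n) => sPeakSet n π = S).card

def svalHat (n : ℕ) (π : Equiv.Perm (Fin n)) (i : ℕ) : ℤ :=
  if i = 0 then 0 else sval n π i

/-- Peak set with the convention `π_0 = 0`: positions `i ∈ {1,…,n-1}`. -/
def sPeakSetHat (n : ℕ) (π : Equiv.Perm (Fin n)) : Finset ℕ :=
  (Finset.Icc 1 (n - 1)).filter fun i =>
    svalHat n π (i - 1) < svalHat n π i ∧ svalHat n π (i + 1) < svalHat n π i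

/-- `#P̂(S,n)`: permutations of `{1,…,n}` with `π_0 = 0` prepended and peak set exactly `S`. -/
def PPhat (n : ℕ) (S : Finset ℕ) : ℕ :=
  (Finset.univ.filter fun π : Equiv.Perm (Fin n) => sPeakSetHat n π = S).card

/-- with `π_0 = 0`, `#P̂({1},n) = 2^(n-1) - 1`. -/

lemma compl_card_eq {n : ℕ} (S : Finset (Fin n)) : Sᶜ.card = n - S.card := by
  simp [card_compl]

/-- valley permutation of a set `S`: elements of `S` in decreasing order, then `Sᶜ` increasing. -/

noncomputable def sigmaOf (n : ℕ) (S : Finset (Fin n)) : Equiv.Perm (Fin n) :=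
  Equiv.ofBijective
    (fun j => if h : (j : ℕ) < S.card then
        S.orderEmbOfFin rfl ⟨S.card - 1 - j, by omega⟩
      else Sᶜ.orderEmbOfFin (compl_card_eq S) ⟨(j : ℕ) - S.card, by
        have := j.isLt; omega⟩)
    (by
      rw [← Finite.injective_iff_bijective]
      intro a b hab
      by_cases ha : (a : ℕ) < S.card <;> by_cases hb : (b : ℕ) < S.card <;>
        simp only [ha, hb, dif_pos, dif_neg, not_false_iff] at hab
      · have := congrArg Fin.val ((S.orderEmbOfFin rfl).injective hab)
        simp only at this
        exact Fin.ext (by omega)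
      · have h1 := S.orderEmbOfFin_mem rfl ⟨S.card - 1 - a, by omega⟩
        have h2 := Finset.orderEmbOfFin_mem Sᶜ (compl_card_eq S) ⟨(b:ℕ) - S.card, by
          have := b.isLt; omega⟩
        rw [hab] at h1
        exact absurd h1 (Finset.mem_compl.mp h2)
      · have h1 := S.orderEmbOfFin_mem rfl ⟨S.card - 1 - b, by omega⟩
        have h2 := Finset.orderEmbOfFin_mem Sᶜ (compl_card_eq S) ⟨(a:ℕ) - S.card, by
          have := a.isLt; omega⟩
        rw [← hab] at h1
        exact absurd h1 (Finset.mem_compl.mp h2)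
      · have := congrArg Fin.val ((Sᶜ.orderEmbOfFin (compl_card_eq S)).injective hab)
        simp only at this
        have := a.isLt; have := b.isLt
        exact Fin.ext (by omega))

lemma sigmaOf_apply_lt {n : ℕ} (S : Finset (Fin n)) {j : Fin n} (h : (j : ℕ) < S.card) :
    sigmaOf n S j = S.orderEmbOfFin rfl ⟨S.card - 1 - j, by omega⟩ := by
  simp [sigmaOf, Equiv.ofBijective_apply, h]

lemma sigmaOf_apply_ge {n : ℕ} (S : Finset (Fin n)) {j : Fin n} (h : ¬ (j : ℕ) < S.card) :
    sigmaOf n S j = Sᶜ.orderEmbOfFin (compl_card_eq S) ⟨(j : ℕ) - S.card, by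
      have := j.isLt; omega⟩ := by
  simp [sigmaOf, Equiv.ofBijective_apply, h]

lemma sigmaOf_mem_iff {n : ℕ} (S : Finset (Fin n)) (j : Fin n) :
    sigmaOf n S j ∈ S ↔ (j : ℕ) < S.card := by
  constructor
  · intro hm
    by_contra h
    rw [sigmaOf_apply_ge S h] at hm
    have h2 := Finset.orderEmbOfFin_mem Sᶜ (compl_card_eq S) ⟨(j:ℕ) - S.card, by
      have := j.isLt; omega⟩
    simp only [mem_compl] at h2
    exact h2 hm
  · intro h
    rw [sigmaOf_apply_lt S h]
    exact S.orderEmbOfFin_mem rfl _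

lemma sigmaOf_desc {n : ℕ} (S : Finset (Fin n)) {a b : Fin n}
    (hab : (a : ℕ) < b) (hb : (b : ℕ) < S.card) :
    sigmaOf n S b < sigmaOf n S a := by
  rw [sigmaOf_apply_lt S hb, sigmaOf_apply_lt S (lt_trans hab hb)]
  exact (S.orderEmbOfFin rfl).strictMono (by simp only [Fin.mk_lt_mk]; omega)

lemma sigmaOf_asc {n : ℕ} (S : Finset (Fin n)) {a b : Fin n}
    (hab : (a : ℕ) < b) (ha : ¬ (a : ℕ) < S.card) :
    sigmaOf n S a < sigmaOf n S b := by
  have hb : ¬ (b : ℕ) < S.card := by omega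
  rw [sigmaOf_apply_ge S ha, sigmaOf_apply_ge S hb]
  exact (Sᶜ.orderEmbOfFin (compl_card_eq S)).strictMono (by
    simp only [Fin.mk_lt_mk]; omega)

lemma sigmaOf_at_card {n : ℕ} (S : Finset (Fin n)) (hn : 0 < n)
    (h0 : (⟨0, hn⟩ : Fin n) ∉ S)
    (hk : S.card < n) : sigmaOf n S ⟨S.card, hk⟩ = ⟨0, hn⟩ := by
  have h := sigmaOf_apply_ge S (j := ⟨S.card, hk⟩) (by simp)
  rw [h]
  have heq : (⟨(S.card : ℕ) - S.card, by omega⟩ : Fin (n - S.card))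
      = ⟨0, by omega⟩ := by simp
  rw [heq, Finset.orderEmbOfFin_zero (compl_card_eq S) (by omega)]
  have h0' : (⟨0, hn⟩ : Fin n) ∈ Sᶜ := Finset.mem_compl.mpr h0
  apply le_antisymm
  · exact Finset.min'_le _ _ h0'
  · rw [Fin.le_def]
    exact Nat.zero_le _

lemma sval_lt_sval {n : ℕ} (π : Equiv.Perm (Fin n)) {a b : ℕ}
    (ha : a - 1 < n) (hb : b - 1 < n) :
    (sval n π a < sval n π b ↔ π ⟨a - 1, ha⟩ < π ⟨b - 1, hb⟩) := by
  simp only [sval, dif_pos ha, dif_pos hb, Fin.lt_def]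
  omega

lemma card_lt_of_notMem_zero {n : ℕ} (hn : 0 < n) {S : Finset (Fin n)}
    (h0 : (⟨0, hn⟩ : Fin n) ∉ S) : S.card < n := by
  have hsub : S ⊆ Finset.univ.erase ⟨0, hn⟩ := fun x hx =>
    Finset.mem_erase.mpr ⟨fun he => h0 (he ▸ hx), Finset.mem_univ x⟩
  have := Finset.card_le_card hsub
  rw [Finset.card_erase_of_mem (Finset.mem_univ _)] at this
  simp only [Finset.card_univ, Fintype.card_fin] at this
  omega

lemma sigmaOf_peakSet {n : ℕ} (hn : 2 ≤ n) (S : Finset (Fin n))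
    (h0 : (⟨0, by omega⟩ : Fin n) ∉ S) (hne : S.Nonempty) :
    sPeakSetHat n (sigmaOf n S) = {1} := by
  have hk1 : 1 ≤ S.card := Finset.card_pos.mpr hne
  have hkn : S.card < n := card_lt_of_notMem_zero (by omega) h0
  set σ := sigmaOf n S with hσ
  ext i
  simp only [sPeakSetHat, Finset.mem_filter, Finset.mem_Icc, Finset.mem_singleton]
  constructor
  · rintro ⟨⟨h1i, hin⟩, hL, hR⟩
    by_contra hne1
    have hi2 : 2 ≤ i := by omega
    have hi1n : i - 1 - 1 < n := by omega
    have hiin : i - 1 < n := by omega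
    have hip : i + 1 - 1 < n := by omega
    rw [show svalHat n σ (i-1) = sval n σ (i-1) by simp [svalHat]; omega,
        show svalHat n σ i = sval n σ i by simp [svalHat]; omega] at hL
    rw [show svalHat n σ (i+1) = sval n σ (i+1) by simp [svalHat],
        show svalHat n σ i = sval n σ i by simp [svalHat]; omega] at hR
    rw [sval_lt_sval σ hi1n hiin] at hL
    rw [sval_lt_sval σ hip hiin] at hR
    by_cases hc : i - 1 < S.card
    · exact absurd hL (lt_asymm (sigmaOf_desc S (a := ⟨i-1-1, hi1n⟩)
        (b := ⟨i-1, hiin⟩) (by simp; omega) (by simpa using hc)))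
    · exact absurd hR (lt_asymm (sigmaOf_asc S (a := ⟨i-1, hiin⟩)
        (b := ⟨i+1-1, hip⟩) (by simp; omega) (by simpa using hc)))
  · rintro rfl
    refine ⟨⟨le_refl _, by omega⟩, ?_, ?_⟩
    · have h1n : (1:ℕ) - 1 < n := by omega
      simp only [svalHat, if_pos rfl, if_neg (one_ne_zero), sval, dif_pos h1n]
      positivity
    · have h1n : (1:ℕ) - 1 < n := by omega
      have h2n : (2:ℕ) - 1 < n := by omega
      rw [show svalHat n σ (1+1) = sval n σ 2 by simp [svalHat],
          show svalHat n σ 1 = sval n σ 1 by simp [svalHat],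
          sval_lt_sval σ h2n h1n]
      by_cases hc : 1 < S.card
      · exact sigmaOf_desc S (a := ⟨0, by omega⟩) (b := ⟨1, by omega⟩) (by simp) (by simpa using hc)
      · have hk : S.card = 1 := by omega
        have hz : σ ⟨2 - 1, h2n⟩ = ⟨0, by omega⟩ := by
          have h := sigmaOf_at_card S (show 0 < n by omega) h0 hkn
          have hidx : (⟨S.card, hkn⟩ : Fin n) = ⟨2 - 1, h2n⟩ := Fin.ext (by simp [hk])
          rwa [hidx] at h
        have hmem : σ ⟨1 - 1, h1n⟩ ∈ S := (sigmaOf_mem_iff S _).mpr (by simp [hk])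
        rw [hz, Fin.lt_def]
        have h1 : σ ⟨1 - 1, h1n⟩ ≠ ⟨0, by omega⟩ := fun he => h0 (he ▸ hmem)
        have h2 : (σ ⟨1 - 1, h1n⟩ : ℕ) ≠ 0 := fun hv => h1 (Fin.ext hv)
        show (0:ℕ) < (σ ⟨1 - 1, h1n⟩ : ℕ)
        omega

def gval (n : ℕ) (π : Equiv.Perm (Fin n)) (j : ℕ) : ℕ :=
  if h : j < n then (π ⟨j, h⟩ : ℕ) else 0

lemma svalHat_eq_gval {n : ℕ} (π : Equiv.Perm (Fin n)) {i : ℕ} (hi : 1 ≤ i) (h : i - 1 < n) :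
    svalHat n π i = (gval n π (i - 1) : ℤ) + 1 := by
  simp only [svalHat, if_neg (by omega : i ≠ 0), sval, dif_pos h, gval, dif_pos h]

lemma gval_inj {n : ℕ} (π : Equiv.Perm (Fin n)) {a b : ℕ} (ha : a < n) (hb : b < n)
    (h : gval n π a = gval n π b) : a = b := by
  simp only [gval, dif_pos ha, dif_pos hb] at h
  have := π.injective (Fin.ext h)
  exact congrArg Fin.val this

/-- membership of `i ≥ 2` in the hat peak set, in terms of `gval`. -/

lemma peak_iff_gval {n : ℕ} (π : Equiv.Perm (Fin n)) {j : ℕ} (hj1 : 1 ≤ j) (hjn : j + 1 < n) :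
    (j + 1 ∈ sPeakSetHat n π) ↔ (gval n π (j-1) < gval n π j ∧ gval n π (j+1) < gval n π j) := by
  simp only [sPeakSetHat, Finset.mem_filter, Finset.mem_Icc]
  rw [show j + 1 - 1 = j from rfl]
  rw [svalHat_eq_gval π (by omega : 1 ≤ j) (by omega), svalHat_eq_gval π (by omega : 1 ≤ j+1) (by omega),
      svalHat_eq_gval π (by omega : 1 ≤ j+1+1) (by omega)]
  rw [show j + 1 - 1 = j from rfl, show j + 1 + 1 - 1 = j + 1 from rfl]
  constructor
  · rintro ⟨-, h1, h2⟩; exact ⟨by exact_mod_cast by omega, by exact_mod_cast by omega⟩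
  · rintro ⟨h1, h2⟩; exact ⟨⟨by omega, by omega⟩, by exact_mod_cast by omega, by exact_mod_cast by omega⟩

/-- the "shape" consequences of having hat peak set exactly `{1}`. -/

lemma shape_of_peak_one {n : ℕ} (π : Equiv.Perm (Fin n)) (hP : sPeakSetHat n π = {1}) :
    2 ≤ n ∧ gval n π 1 < gval n π 0 ∧
    (∀ j, 1 ≤ j → j + 1 < n → gval n π (j-1) < gval n π j → gval n π j < gval n π (j+1)) := by
  have h1mem : (1 : ℕ) ∈ sPeakSetHat n π := by rw [hP]; exact Finset.mem_singleton_self 1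
  simp only [sPeakSetHat, Finset.mem_filter, Finset.mem_Icc] at h1mem
  obtain ⟨⟨-, h1n⟩, hc1, hc2⟩ := h1mem
  have hn2 : 2 ≤ n := by omega
  rw [svalHat_eq_gval π (by omega) (by omega), svalHat_eq_gval π (by omega) (by omega)] at hc2
  rw [show (1:ℕ) + 1 - 1 = 1 from rfl, show (1:ℕ) - 1 = 0 from rfl] at hc2
  have hdesc : gval n π 1 < gval n π 0 := by exact_mod_cast by omega
  refine ⟨hn2, hdesc, fun j hj1 hjn hasc => ?_⟩
  have hne : j + 1 ∉ sPeakSetHat n π := by rw [hP]; simp; omega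
  rw [peak_iff_gval π hj1 hjn] at hne
  push_neg at hne
  have := hne hasc
  have : gval n π j ≠ gval n π (j+1) := fun he => by
    have := gval_inj π (by omega : j < n) hjn he; omega
  omega

def tauOf (n : ℕ) (hn : 0 < n) (π : Equiv.Perm (Fin n)) : Finset (Fin n) :=
  Finset.univ.filter fun x => π.symm x < π.symm ⟨0, hn⟩

lemma mem_tauOf {n : ℕ} (hn : 0 < n) (π : Equiv.Perm (Fin n)) (x : Fin n) :
    x ∈ tauOf n hn π ↔ (π.symm x : ℕ) < (π.symm ⟨0, hn⟩ : ℕ) := by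
  simp only [tauOf, Finset.mem_filter, Finset.mem_univ, true_and, Fin.lt_def]

lemma card_tauOf {n : ℕ} (hn : 0 < n) (π : Equiv.Perm (Fin n)) :
    (tauOf n hn π).card = (π.symm ⟨0, hn⟩ : ℕ) := by
  have : tauOf n hn π = Finset.image π.symm.symm (Finset.Iio (π.symm ⟨0, hn⟩)) := by
    ext x
    simp only [tauOf, Finset.mem_filter, Finset.mem_univ, true_and, Finset.mem_image,
      Finset.mem_Iio, Equiv.symm_symm]
    constructor
    · intro h; exact ⟨π.symm x, h, π.apply_symm_apply x⟩
    · rintro ⟨j, hj, rfl⟩; rwa [π.symm_apply_apply]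
  rw [this, Finset.card_image_of_injective _ π.symm.symm.injective, Fin.card_Iio]

lemma sigmaOf_tauOf {n : ℕ} (hn : 0 < n) (π : Equiv.Perm (Fin n))
    (hP : sPeakSetHat n π = {1}) : sigmaOf n (tauOf n hn π) = π := by
  obtain ⟨hn2, hdesc0, hstep⟩ := shape_of_peak_one π hP
  set T := tauOf n hn π with hT
  set p := (π.symm ⟨0, hn⟩ : ℕ) with hp
  have hpn : p < n := (π.symm ⟨0, hn⟩).isLt
  have hcard : T.card = p := card_tauOf hn π
  have hgp : gval n π p = 0 := by
    simp only [gval, dif_pos hpn, hp]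
    have h2 : π (π.symm ⟨0,hn⟩) = ⟨0,hn⟩ := π.apply_symm_apply _
    rw [dif_pos (π.symm ⟨0,hn⟩).isLt]
    rw [show (⟨(π.symm ⟨0,hn⟩ : ℕ), hpn⟩ : Fin n) = π.symm ⟨0,hn⟩ from Fin.ext rfl, h2]
  have hp1 : 1 ≤ p := by
    by_contra h
    have hp0 : p = 0 := by omega
    rw [hp0] at hgp; omega
  have chain : ∀ m, ∀ j, 1 ≤ j → j < n → gval n π (j-1) < gval n π j → j ≤ m → m < n →
      gval n π (m-1) < gval n π m := by
    intro m
    induction m with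
    | zero => intro j h1 _ _ hjm _; omega
    | succ m ih =>
      intro j h1 hjn hasc hjm hmn
      rcases Nat.lt_or_ge m j with hc | hc
      · have hje : j = m+1 := by omega
        subst hje; exact hasc
      · have hprev := ih j h1 hjn hasc hc (by omega)
        have := hstep m (by omega) (by omega) hprev
        simpa using this
  have desc_adj : ∀ j, 1 ≤ j → j ≤ p → gval n π j < gval n π (j-1) := by
    intro j h1 hjp
    rcases lt_trichotomy (gval n π (j-1)) (gval n π j) with h | h | h
    · have := chain p j h1 (by omega) h hjp hpn
      omega
    · have := gval_inj π (a := j-1) (b := j) (by omega) (by omega) h; omega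
    · exact h
  have asc_adj : ∀ j, p < j → j < n → gval n π (j-1) < gval n π j := by
    intro j hpj hjn
    have hbase : gval n π p < gval n π (p+1) := by
      have hne : gval n π (p+1) ≠ gval n π p := fun h => by
        have := gval_inj π (a := p+1) (b := p) (by omega) (by omega) h; omega
      omega
    exact chain j (p+1) (by omega) (by omega) (by simpa using hbase) (by omega) hjn
  have desc_chain : ∀ b a, a < b → b ≤ p → gval n π b < gval n π a := by
    intro b
    induction b with
    | zero => omega
    | succ b ih =>
      intro a hab hbp
      have h2 := desc_adj (b+1) (by omega) hbp
      rcases Nat.lt_or_ge a b with h | h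
      · exact lt_trans (by simpa using h2) (ih a h (by omega))
      · have hab2 : a = b := by omega
        subst hab2; simpa using h2
  have asc_chain : ∀ b a, p ≤ a → a < b → b < n → gval n π a < gval n π b := by
    intro b
    induction b with
    | zero => omega
    | succ b ih =>
      intro a hpa hab hbn
      have h2 := asc_adj (b+1) (by omega) hbn
      rcases Nat.lt_or_ge a b with h | h
      · exact lt_trans (ih a hpa h (by omega)) (by simpa using h2)
      · have hab2 : a = b := by omega
        subst hab2; simpa using h2
  apply Equiv.ext
  intro j
  have hgj : ∀ (a : ℕ) (h : a < n), gval n π a = (π ⟨a, h⟩ : ℕ) := fun a h => by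
    simp [gval, dif_pos h]
  by_cases hj : (j : ℕ) < T.card
  · rw [sigmaOf_apply_lt T hj]
    have hF : (fun t : Fin T.card => π ⟨T.card - 1 - (t:ℕ), by omega⟩)
        = T.orderEmbOfFin rfl := by
      apply Finset.orderEmbOfFin_unique rfl
      · intro t
        refine (mem_tauOf hn π _).mpr ?_
        rw [π.symm_apply_apply]
        have := t.isLt
        show T.card - 1 - (t:ℕ) < p
        omega
      · intro t t' htt'
        rw [Fin.lt_def, ← hgj, ← hgj]
        have ht' := t'.isLt
        exact desc_chain (T.card - 1 - (t:ℕ)) (T.card - 1 - (t':ℕ))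
          (by omega) (by omega)
    rw [← hF]
    exact congrArg π (Fin.ext (show T.card - 1 - (T.card - 1 - (j:ℕ)) = (j:ℕ) by omega))
  · rw [sigmaOf_apply_ge T hj]
    have hG : (fun t : Fin (n - T.card) => π ⟨T.card + (t:ℕ), by have := t.isLt; omega⟩)
        = Tᶜ.orderEmbOfFin (compl_card_eq T) := by
      apply Finset.orderEmbOfFin_unique
      · intro t
        refine Finset.mem_compl.mpr fun hmem => ?_
        have hlt := (mem_tauOf hn π _).mp hmem
        rw [π.symm_apply_apply] at hlt
        have hlt' : T.card + (t:ℕ) < p := hlt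
        omega
      · intro t t' htt'
        rw [Fin.lt_def, ← hgj, ← hgj]
        have ht' := t'.isLt
        exact asc_chain (T.card + (t':ℕ)) (T.card + (t:ℕ)) (by omega) (by omega) (by omega)
    rw [← hG]
    exact congrArg π (Fin.ext (show T.card + ((j:ℕ) - T.card) = (j:ℕ) by omega))

lemma tauOf_sigmaOf {n : ℕ} (hn : 0 < n) (S : Finset (Fin n)) (h0 : (⟨0, hn⟩ : Fin n) ∉ S) :
    tauOf n hn (sigmaOf n S) = S := by
  have hkn : S.card < n := card_lt_of_notMem_zero hn h0
  have hsymm : (sigmaOf n S).symm ⟨0, hn⟩ = ⟨S.card, hkn⟩ := by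
    rw [Equiv.symm_apply_eq]
    exact (sigmaOf_at_card S hn h0 hkn).symm
  ext x
  rw [mem_tauOf, hsymm]
  have h := sigmaOf_mem_iff S ((sigmaOf n S).symm x)
  rw [Equiv.apply_symm_apply] at h
  exact h.symm

theorem stmt15 (n : ℕ) (hn : 1 ≤ n) : PPhat n {1} = 2 ^ (n - 1) - 1 := by
  have hn0 : 0 < n := hn
  rw [PPhat]
  have key : (Finset.univ.filter fun π : Equiv.Perm (Fin n) => sPeakSetHat n π = {1}).card
      = (((Finset.univ.erase (⟨0, hn0⟩ : Fin n)).powerset).erase ∅).card := by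
    apply Finset.card_bij' (fun π _ => tauOf n hn0 π) (fun S _ => sigmaOf n S)
    · -- hi
      intro π hπ
      have hP : sPeakSetHat n π = {1} := (Finset.mem_filter.mp hπ).2
      obtain ⟨hn2, hdesc0, -⟩ := shape_of_peak_one π hP
      have hp1 : 1 ≤ ((π.symm ⟨0, hn0⟩ : Fin n) : ℕ) := by
        by_contra h
        have h2 : π.symm ⟨0, hn0⟩ = ⟨0, hn0⟩ := Fin.ext (show ((π.symm ⟨0, hn0⟩ : Fin n) : ℕ) = 0 by omega)
        have h3 : π ⟨0, hn0⟩ = ⟨0, hn0⟩ := by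
          conv_lhs => rw [← h2]
          exact π.apply_symm_apply _
        have h4 : gval n π 0 = 0 := by
          simp only [gval, dif_pos hn0]
          rw [show (⟨0, hn0⟩ : Fin n) = ⟨0 - 0, hn0⟩ from rfl] at h3
          rw [show (⟨0, hn0⟩ : Fin n) = ⟨0, hn0⟩ from rfl, h3]
        omega
      rw [Finset.mem_erase]
      constructor
      · rw [← Finset.nonempty_iff_ne_empty]
        refine ⟨π ⟨0, hn0⟩, ?_⟩
        rw [mem_tauOf, π.symm_apply_apply]
        exact hp1
      · rw [Finset.mem_powerset]
        intro x hx
        rw [mem_tauOf] at hx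
        refine Finset.mem_erase.mpr ⟨fun he => ?_, Finset.mem_univ x⟩
        rw [he] at hx
        omega
    · -- hj
      intro S hS
      rw [Finset.mem_erase, Finset.mem_powerset] at hS
      obtain ⟨hSne, hSsub⟩ := hS
      have hne : S.Nonempty := Finset.nonempty_iff_ne_empty.mpr hSne
      have h0 : (⟨0, hn0⟩ : Fin n) ∉ S := fun h =>
        (Finset.mem_erase.mp (hSsub h)).1 rfl
      have hn2 : 2 ≤ n := by
        obtain ⟨x, hx⟩ := hne
        have hx0 : x ≠ ⟨0, hn0⟩ := (Finset.mem_erase.mp (hSsub hx)).1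
        have : (x : ℕ) ≠ 0 := fun h => hx0 (Fin.ext h)
        have := x.isLt
        omega
      exact Finset.mem_filter.mpr ⟨Finset.mem_univ _, sigmaOf_peakSet hn2 S h0 hne⟩
    · -- left inverse
      intro π hπ
      exact sigmaOf_tauOf hn0 π (Finset.mem_filter.mp hπ).2
    · -- right inverse
      intro S hS
      rw [Finset.mem_erase, Finset.mem_powerset] at hS
      have h0 : (⟨0, hn0⟩ : Fin n) ∉ S := fun h =>
        (Finset.mem_erase.mp (hS.2 h)).1 rfl
      exact tauOf_sigmaOf hn0 S h0
  rw [key, Finset.card_erase_of_mem (Finset.empty_mem_powerset _),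
      Finset.card_powerset, Finset.card_erase_of_mem (Finset.mem_univ _)]
  simp
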